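/- Let (Ω,μ) be a probability space, φ a strictly increasing Young function with Legendre transform φ*, and x a bounded measurable real function satisfying ∫ e^{t x} dμ ≤ e^{φ(t)} for all t ≥ 0. Then for every probability density ρ ≥ 0 with ∫ ρ dμ = 1, one has ∫ x ρ dμ ≤ (φ*)^{-1}(Ent(ρ)), where Ent(ρ) = ∫ ρ log ρ dμ and (φ*)^{-1}(z) = sup{s : φ*(s) ≤ z}. -/

import Mathlib

open MeasureTheory

/-- Young-type pointwise inequality: `u*v ≤ exp u + v*log v - v` for `v ≥ 0`. -/
lemma young_exp_log (u v : ℝ) (hv : 0 ≤ v) :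
    u * v ≤ Real.exp u + v * Real.log v - v := by
  rcases eq_or_lt_of_le hv with h | h
  · simp [← h, Real.exp_pos u |>.le]
  · have h1 : (u - Real.log v) + 1 ≤ Real.exp (u - Real.log v) := Real.add_one_le_exp _
    have h2 : Real.exp (u - Real.log v) = Real.exp u / v := by
      rw [Real.exp_sub, Real.exp_log h]
    have h3 : v * ((u - Real.log v) + 1) ≤ v * (Real.exp u / v) := by
      exact mul_le_mul_of_nonneg_left (h2 ▸ h1) h.le
    have h4 : v * (Real.exp u / v) = Real.exp u := by field_simp
    nlinarith [h3, h4]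

theorem stmt8 {Ω : Type*} [MeasurableSpace Ω] (μ : Measure Ω) [IsProbabilityMeasure μ]
    (φ : ℝ → ℝ) (hconv : ConvexOn ℝ (Set.Ici (0 : ℝ)) φ)
    (hmono : StrictMonoOn φ (Set.Ici (0 : ℝ))) (hφ0 : φ 0 = 0)
    (x : Ω → ℝ) (hx : Measurable x) (M : ℝ) (hbdd : ∀ ω, |x ω| ≤ M)
    (hexp : ∀ t : ℝ, 0 ≤ t → ∫ ω, Real.exp (t * x ω) ∂μ ≤ Real.exp (φ t))
    (ρ : Ω → ℝ) (hρ : Measurable ρ) (hρ0 : ∀ ω, 0 ≤ ρ ω)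
    (hρint : Integrable ρ μ) (hρ1 : ∫ ω, ρ ω ∂μ = 1)
    (hent : Integrable (fun ω => ρ ω * Real.log (ρ ω)) μ) :
    ∫ ω, x ω * ρ ω ∂μ ≤
      sSup {s : ℝ | 0 ≤ s ∧
        ∀ t : ℝ, 0 ≤ t → t * s - φ t ≤ ∫ ω, ρ ω * Real.log (ρ ω) ∂μ} := by
  set E : ℝ := ∫ ω, ρ ω * Real.log (ρ ω) ∂μ with hE
  set I : ℝ := ∫ ω, x ω * ρ ω ∂μ with hI
  -- entropy is nonnegative
  have hE0 : 0 ≤ E := by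
    have hpt : ∀ ω, ρ ω - 1 ≤ ρ ω * Real.log (ρ ω) := by
      intro ω
      have := young_exp_log 0 (ρ ω) (hρ0 ω)
      simp at this
      linarith
    have h1 : ∫ ω, (ρ ω - 1) ∂μ ≤ E := by
      apply integral_mono (hρint.sub (integrable_const 1)) hent hpt
    have h2 : ∫ ω, (ρ ω - 1) ∂μ = 0 := by
      rw [integral_sub hρint (integrable_const 1), hρ1]
      simp
    linarith
  -- the Gibbs variational bound
  have hgibbs : ∀ t : ℝ, 0 ≤ t → t * I - φ t ≤ E := by
    intro t ht
    set Z : ℝ := ∫ ω, Real.exp (t * x ω) ∂μ with hZ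
    have hexpint : Integrable (fun ω => Real.exp (t * x ω)) μ := by
      apply Integrable.mono' (integrable_const (Real.exp (t * M)))
        ((hx.const_mul t).exp.aestronglyMeasurable)
      filter_upwards with ω
      rw [Real.norm_eq_abs, abs_of_pos (Real.exp_pos _)]
      exact Real.exp_le_exp.2 (mul_le_mul_of_nonneg_left
        ((abs_le.1 (hbdd ω)).2) ht)
    have hZpos : 0 < Z := by
      have : (0:ℝ) < Real.exp (-(|t| * M)) := Real.exp_pos _
      have hle : ∫ ω, Real.exp (-(|t| * M)) ∂μ ≤ Z := by
        apply integral_mono (integrable_const _) hexpint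
        intro ω
        apply Real.exp_le_exp.2
        have h1 : |t * x ω| ≤ |t| * M := by
          rw [abs_mul]
          exact mul_le_mul_of_nonneg_left (hbdd ω) (abs_nonneg t)
        linarith [(abs_le.1 h1).1]
      have h0 : ∫ _ω, Real.exp (-(|t| * M)) ∂μ = Real.exp (-(|t| * M)) := by simp
      rw [h0] at hle
      exact lt_of_lt_of_le this hle
    set c : ℝ := Real.log Z with hc
    have hcφ : c ≤ φ t := (Real.log_le_iff_le_exp hZpos).2 (hexp t ht)
    -- integrability of (t x - c) ρ and of x ρ
    have hxρ : Integrable (fun ω => x ω * ρ ω) μ :=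
      hρint.bdd_mul (c := M) hx.aestronglyMeasurable (ae_of_all _ fun ω => by
        simpa using hbdd ω)
    have hfρ : Integrable (fun ω => (t * x ω - c) * ρ ω) μ :=
      hρint.bdd_mul (c := |t| * M + |c|) ((hx.const_mul t).sub measurable_const).aestronglyMeasurable
        (ae_of_all _ fun ω => by
          have h1 : |t * x ω| ≤ |t| * M := by
            rw [abs_mul]
            exact mul_le_mul_of_nonneg_left (hbdd ω) (abs_nonneg t)
          calc ‖t * x ω - c‖ ≤ |t * x ω| + |c| := abs_sub _ _
            _ ≤ |t| * M + |c| := by linarith)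
    have hefint : Integrable (fun ω => Real.exp (t * x ω - c)) μ := by
      simp_rw [Real.exp_sub]
      exact hexpint.div_const _
    -- pointwise Young and integrate
    have hpt : ∀ ω, (t * x ω - c) * ρ ω ≤
        Real.exp (t * x ω - c) + ρ ω * Real.log (ρ ω) - ρ ω :=
      fun ω => young_exp_log _ _ (hρ0 ω)
    have hint : ∫ ω, (t * x ω - c) * ρ ω ∂μ ≤
        ∫ ω, (Real.exp (t * x ω - c) + ρ ω * Real.log (ρ ω) - ρ ω) ∂μ :=
      integral_mono hfρ ((hefint.add hent).sub hρint) hpt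
    have hlhs : ∫ ω, (t * x ω - c) * ρ ω ∂μ = t * I - c := by
      have : ∀ ω, (t * x ω - c) * ρ ω = t * (x ω * ρ ω) - c * ρ ω := by
        intro ω; ring
      simp_rw [this]
      rw [integral_sub ((hxρ.const_mul t)) (hρint.const_mul c),
        integral_const_mul, integral_const_mul, hρ1, hI, mul_one]
    have hexpval : ∫ ω, Real.exp (t * x ω - c) ∂μ = 1 := by
      simp_rw [Real.exp_sub]
      rw [integral_div, ← hZ, hc, Real.exp_log hZpos, div_self hZpos.ne']
    have hrhs : ∫ ω, (Real.exp (t * x ω - c) + ρ ω * Real.log (ρ ω) - ρ ω) ∂μ = E := by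
      have heq : ∀ ω, Real.exp (t * x ω - c) + ρ ω * Real.log (ρ ω) - ρ ω
          = (fun ω => Real.exp (t * x ω - c)) ω + ((fun ω => ρ ω * Real.log (ρ ω)) ω - ρ ω) := by
        intro ω; ring
      simp_rw [heq]
      have hsub : Integrable (fun ω => ρ ω * Real.log (ρ ω) - ρ ω) μ := hent.sub hρint
      rw [integral_add hefint hsub, integral_sub hent hρint,
        hexpval, hρ1, ← hE]
      ring
    rw [hlhs, hrhs] at hint
    linarith
  -- conclude: max I 0 belongs to the set
  set S := {s : ℝ | 0 ≤ s ∧ ∀ t : ℝ, 0 ≤ t → t * s - φ t ≤ E} with hS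
  have hφpos : ∀ t : ℝ, 0 ≤ t → 0 ≤ φ t := by
    intro t ht
    rcases eq_or_lt_of_le ht with h | h
    · simp [← h, hφ0]
    · have := hmono (Set.self_mem_Ici) (Set.mem_Ici.2 ht) h
      linarith [hφ0]
  have hmem : max I 0 ∈ S := by
    refine ⟨le_max_right _ _, fun t ht => ?_⟩
    rcases le_total I 0 with h | h
    · rw [max_eq_right h]
      have := hφpos t ht
      linarith
    · rw [max_eq_left h]
      exact hgibbs t ht
  have hbddS : BddAbove S := by
    refine ⟨E + φ 1, fun s hs => ?_⟩
    have := hs.2 1 zero_le_one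
    linarith
  calc I ≤ max I 0 := le_max_left _ _
    _ ≤ sSup S := le_csSup hbddS hmem
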